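/- Consider the reduction f from 3SAT mapping a 3CNF formula φ = c₁ ∧ … ∧ c_n over variables x₁,…,x_m to the monotone hybrid formula f(φ) = ◇(i₀ ∧ ◇i₁) ∧ (⋀_{ℓ=1}^m (◇(i₀ ∧ x_ℓ) ∨ ◇(i₁ ∧ x_ℓ))) ∧ h(φ), where i₀, i₁ and all x_ℓ are nominals, h(c_j) = ◇(h(l₁ʲ) ∨ h(l₂ʲ) ∨ h(l₃ʲ)), h of a positive literal x is (i₁ ∧ x), h of a negative literal ¬x is (i₀ ∧ x), and h(c₁ ∧ … ∧ c_n) = h(c₁) ∧ … ∧ h(c_n). Then φ is satisfiable as a propositional formula if and only if f(φ) is satisfiable in some model over a linear frame. -/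

import Mathlib

/-- A literal: a propositional variable together with its sign (true = positive). -/
abbrev Lit := ℕ × Bool

/-- A 3SAT clause: a triple of literals. -/
abbrev Clause := Lit × Lit × Lit

/-- Monotone hybrid formulas with nominals, ⊤, ∧, ∨ and ◇ (the fragment needed
for the reduction f; no negation). -/
inductive HForm : Type
  | nom : ℕ → HForm
  | top : HForm
  | conj : HForm → HForm → HForm
  | disj : HForm → HForm → HForm
  | dia : HForm → HForm

/-- Satisfaction in a Kripke model (W,R,η) with nominal valuation η. -/
def sat {W : Type} (R : W → W → Prop) (η : ℕ → W) (w : W) : HForm → Prop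
  | .nom i => η i = w
  | .top => True
  | .conj a b => sat R η w a ∧ sat R η w b
  | .disj a b => sat R η w a ∨ sat R η w b
  | .dia a => ∃ v, R w v ∧ sat R η v a

/-- A relation is linear: transitive, irreflexive and trichotomous. -/
def IsLinear {W : Type} (R : W → W → Prop) : Prop :=
  Transitive R ∧ Irreflexive R ∧ ∀ u v, R u v ∨ u = v ∨ R v u

/-- Nominal encoding: i₀ ↦ 0, i₁ ↦ 1, variable x_v ↦ v + 1 (for v ≥ 1).
`hLit`: a positive literal x becomes (i₁ ∧ x), a negative one (i₀ ∧ x). -/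
def hLit : Lit → HForm
  | (v, true) => .conj (.nom 1) (.nom (v + 1))
  | (v, false) => .conj (.nom 0) (.nom (v + 1))

def hClause (c : Clause) : HForm :=
  .dia (.disj (.disj (hLit c.1) (hLit c.2.1)) (hLit c.2.2))

def hCNF : List Clause → HForm
  | [] => .top
  | c :: cs => .conj (hClause c) (hCNF cs)

/-- ⋀_{ℓ=1}^m (◇(i₀ ∧ x_ℓ) ∨ ◇(i₁ ∧ x_ℓ)). -/
def assignConj : ℕ → HForm
  | 0 => .top
  | m + 1 =>
      .conj
        (.disj (.dia (.conj (.nom 0) (.nom (m + 2))))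
               (.dia (.conj (.nom 1) (.nom (m + 2)))))
        (assignConj m)

/-- The reduction f(φ) = ◇(i₀ ∧ ◇i₁) ∧ ⋀_ℓ (◇(i₀ ∧ x_ℓ) ∨ ◇(i₁ ∧ x_ℓ)) ∧ h(φ). -/
def f (m : ℕ) (cs : List Clause) : HForm :=
  .conj (.dia (.conj (.nom 0) (.dia (.nom 1)))) (.conj (assignConj m) (hCNF cs))

def litTrue (β : ℕ → Bool) (l : Lit) : Prop := β l.1 = l.2


lemma sat_hLit {W : Type} (R : W → W → Prop) (η : ℕ → W) (v : W) (l : Lit) :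
    sat R η v (hLit l) ↔ (η (if l.2 then 1 else 0) = v ∧ η (l.1 + 1) = v) := by
  obtain ⟨n, b⟩ := l
  cases b <;> simp [hLit, sat]

lemma sat_hCNF {W : Type} (R : W → W → Prop) (η : ℕ → W) (w : W) (cs : List Clause) :
    sat R η w (hCNF cs) ↔ ∀ c ∈ cs, sat R η w (hClause c) := by
  induction cs with
  | nil => simp [hCNF, sat]
  | cons c cs ih => simp [hCNF, sat, ih]

lemma sat_assignConj {W : Type} (R : W → W → Prop) (η : ℕ → W) (w : W) (m : ℕ) :
    sat R η w (assignConj m) ↔ ∀ ℓ, 1 ≤ ℓ → ℓ ≤ m →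
      ((∃ v, R w v ∧ η 0 = v ∧ η (ℓ+1) = v) ∨ (∃ v, R w v ∧ η 1 = v ∧ η (ℓ+1) = v)) := by
  induction m with
  | zero =>
    simp only [assignConj, sat, true_iff]
    intro ℓ h1 h2; omega
  | succ m ih =>
    simp only [assignConj, sat, ih]
    constructor
    · rintro ⟨h1, h2⟩ ℓ hℓ1 hℓ2
      rcases Nat.lt_or_ge ℓ (m+1) with h | h
      · exact h2 ℓ hℓ1 (by omega)
      · have : ℓ = m + 1 := by omega
        subst this
        rcases h1 with ⟨v, hv, h0, hx⟩ | ⟨v, hv, h0, hx⟩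
        · exact Or.inl ⟨v, hv, h0, hx⟩
        · exact Or.inr ⟨v, hv, h0, hx⟩
    · intro h
      refine ⟨?_, fun ℓ h1 h2 => h ℓ h1 (by omega)⟩
      rcases h (m+1) (by omega) le_rfl with ⟨v, hv, h0, hx⟩ | ⟨v, hv, h0, hx⟩
      · exact Or.inl ⟨v, hv, h0, hx⟩
      · exact Or.inr ⟨v, hv, h0, hx⟩

/-- A 3CNF formula over variables x₁,…,x_m is propositionally satisfiable iff f(φ) is
satisfiable in some model over a linear frame. -/
theorem stmt12 (m : ℕ) (cs : List Clause)
    (hv : ∀ c ∈ cs, c.1.1 ∈ Finset.Icc 1 m ∧ c.2.1.1 ∈ Finset.Icc 1 m ∧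
      c.2.2.1 ∈ Finset.Icc 1 m) :
    (∃ β : ℕ → Bool, ∀ c ∈ cs, litTrue β c.1 ∨ litTrue β c.2.1 ∨ litTrue β c.2.2) ↔
      (∃ (W : Type) (R : W → W → Prop), IsLinear R ∧
        ∃ (η : ℕ → W) (w : W), sat R η w (f m cs)) := by
  constructor
  · rintro ⟨β, hβ⟩
    refine ⟨ℕ, (· < ·), ⟨fun _ _ _ => Nat.lt_trans, Nat.lt_irrefl, fun u v => by omega⟩,
      fun n => if n = 0 then 1 else if n = 1 then 2 else if β (n - 1) then 2 else 1, 0, ?_⟩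
    refine ⟨⟨1, by omega, rfl, 2, by omega, rfl⟩, ?_, ?_⟩
    · rw [sat_assignConj]
      intro ℓ h1 h2
      have hℓ0 : ¬ (ℓ + 1 = 0) := by omega
      have hℓ1 : ¬ (ℓ + 1 = 1) := by omega
      by_cases hb : β ℓ
      · right; exact ⟨2, by omega, rfl, by simp [hℓ0, hℓ1, hb]⟩
      · left; exact ⟨1, by omega, rfl, by simp [hℓ0, hℓ1, hb]; omega⟩
    · rw [sat_hCNF]
      intro c hc
      have hvc := hv c hc
      simp only [Finset.mem_Icc] at hvc
      have key : ∀ l : Lit, 1 ≤ l.1 → litTrue β l →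
          ∃ v, (0 : ℕ) < v ∧ sat (· < ·)
            (fun n => if n = 0 then 1 else if n = 1 then 2 else if β (n - 1) then 2 else 1)
            v (hLit l) := by
        rintro ⟨n, b⟩ hn hl
        simp only [litTrue] at hl
        cases b
        · refine ⟨1, by omega, ?_⟩
          rw [sat_hLit]
          constructor
          · simp
          · simp only
            have : ¬ (n + 1 = 0) := by omega
            rw [if_neg this]
            have : ¬ (n + 1 = 1) := by omega
            rw [if_neg this]
            simp [hl]
        · refine ⟨2, by omega, ?_⟩
          rw [sat_hLit]
          constructor
          · simp
          · simp only
            have : ¬ (n + 1 = 0) := by omega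
            rw [if_neg this]
            have : ¬ (n + 1 = 1) := by omega
            rw [if_neg this]
            simp [hl]
      rcases hβ c hc with h | h | h
      · obtain ⟨v, hv0, hs⟩ := key c.1 (by omega) h
        exact ⟨v, hv0, Or.inl (Or.inl hs)⟩
      · obtain ⟨v, hv0, hs⟩ := key c.2.1 (by omega) h
        exact ⟨v, hv0, Or.inl (Or.inr hs)⟩
      · obtain ⟨v, hv0, hs⟩ := key c.2.2 (by omega) h
        exact ⟨v, hv0, Or.inr hs⟩
  · rintro ⟨W, R, ⟨htr, hirr, _⟩, η, w, ⟨u, hwu, h0u, u', huu', h1u'⟩, hac, hcnf⟩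
    classical
    refine ⟨fun v => decide (η (v + 1) = η 1), ?_⟩
    have h0u2 : η 0 = u := h0u
    have h1u2 : η 1 = u' := h1u'
    have hne : η 0 ≠ η 1 := by
      intro h
      have he : u = u' := by rw [← h0u2, h, h1u2]
      rw [← he] at huu'
      exact hirr u huu' 
    rw [sat_hCNF] at hcnf
    intro c hc
    obtain ⟨v, _, hs⟩ := hcnf c hc
    have key : ∀ l : Lit, sat R η v (hLit l) → litTrue (fun v => decide (η (v + 1) = η 1)) l := by
      rintro ⟨n, b⟩ hl
      rw [sat_hLit] at hl
      obtain ⟨h1, h2⟩ := hl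
      cases b
      · simp only [litTrue, decide_eq_false_iff_not]
        simp only [if_neg] at h1
        intro h
        exact hne (h1.trans (h2.symm.trans h))
      · simp only [litTrue, decide_eq_true_eq]
        simp only [if_pos] at h1
        exact h2.trans h1.symm
    rcases hs with (hs | hs) | hs
    · exact Or.inl (key c.1 hs)
    · exact Or.inr (Or.inl (key c.2.1 hs))
    · exact Or.inr (Or.inr (key c.2.2 hs))
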